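/- In a generalized model category, the class of weak equivalences is closed under retracts. -/

import Mathlib

open CategoryTheory CategoryTheory.Limits CategoryTheory.Functor

universe w₁ w₂ w₃ w₄ v₁ v₂ v₃ v₄

namespace PaperStacks

/-- A functor `p : A ⥤ B` is an isofibration if every isomorphism `f : p.obj a ≅ b` in `B`
lifts to an isomorphism `e : a ≅ a'` in `A` with `p.obj a' = b` and `p.map e.hom = f.hom`
(up to the identification `p.obj a' = b`). -/
def IsIsofibration {A : Type w₁} {B : Type w₂} [Category.{v₁} A] [Category.{v₂} B]
    (p : A ⥤ B) : Prop :=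
  ∀ (a : A) (b : B) (f : p.obj a ≅ b), ∃ (a' : A) (e : a ≅ a') (h : p.obj a' = b),
    p.map e.hom = f.hom ≫ eqToHom h.symm

/-- A surjective equivalence: an equivalence of categories that is surjective on objects. -/
def IsSurjectiveEquivalence {A : Type w₁} {B : Type w₂} [Category.{v₁} A] [Category.{v₂} B]
    (p : A ⥤ B) : Prop :=
  p.IsEquivalence ∧ Function.Surjective p.obj

variable {M : Type w₁} [Category.{v₁} M]

/-- `(L, R)` is a weak factorization system. -/
structure IsWFS (L R : MorphismProperty M) : Prop where
  llp : ∀ ⦃X Y : M⦄ (f : X ⟶ Y),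
    L f ↔ ∀ ⦃Z T : M⦄ (g : Z ⟶ T), R g → HasLiftingProperty f g
  rlp : ∀ ⦃X Y : M⦄ (g : X ⟶ Y),
    R g ↔ ∀ ⦃Z T : M⦄ (f : Z ⟶ T), L f → HasLiftingProperty f g
  fact : ∀ ⦃X Y : M⦄ (f : X ⟶ Y),
    ∃ (Z : M) (i : X ⟶ Z) (p : Z ⟶ Y), L i ∧ R p ∧ i ≫ p = f

/-- `(W, C, F)` is a generalized model category structure on `M`. -/
structure IsGMC (W C F : MorphismProperty M) : Prop where
  hasInitial : HasInitial M
  hasTerminal : HasTerminal M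
  pushoutCof : ∀ ⦃X Y Z : M⦄ (f : X ⟶ Y) (g : X ⟶ Z), C f → HasPushout f g
  pullbackFib : ∀ ⦃X Y Z : M⦄ (f : X ⟶ Y) (g : Z ⟶ Y), F f → HasPullback g f
  twoOutOfThree : W.HasTwoOutOfThreeProperty
  wfs₁ : IsWFS C (F ⊓ W)
  wfs₂ : IsWFS (C ⊓ W) F

/-- An object is fibrant if its map to the terminal object is a fibration. -/
def Fibrant (F : MorphismProperty M) (X : M) : Prop :=
  ∃ (T : M) (h : IsTerminal T), F (h.from X)

/-- An object is cofibrant if the map to it from the initial object is a cofibration. -/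
def Cofibrant (C : MorphismProperty M) (A : M) : Prop :=
  ∃ (I : M) (h : IsInitial I), C (h.to A)


/-- Case of a fibration: a fibration that is a retract of a weak equivalence is a
weak equivalence. -/
theorem fibration_retract_of_weq {W C F : MorphismProperty M} (hM : IsGMC W C F)
    {X Y Z T : M} (f : X ⟶ Y) (g : Z ⟶ T)
    (i : X ⟶ Z) (r : Z ⟶ X) (j : Y ⟶ T) (s : T ⟶ Y)
    (hir : i ≫ r = 𝟙 X) (hjs : j ≫ s = 𝟙 Y)
    (hsq₁ : i ≫ g = f ≫ j) (hsq₂ : g ≫ s = r ≫ f)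
    (hf : F f) (hg : W g) : W f := by
  -- factor g = i' ≫ p with i' ∈ C ∩ W and p ∈ F
  obtain ⟨E, i', p, hi', hp, hfact⟩ := hM.wfs₂.fact g
  have hWp : W p := hM.twoOutOfThree.of_precomp i' p hi'.2 (hfact ▸ hg)
  -- lift in the square i' vs f
  have hlp : HasLiftingProperty i' f := (hM.wfs₂.rlp f).mp hf i' hi'
  have sq : CommSq r i' f (p ≫ s) := ⟨by rw [← Category.assoc, hfact, hsq₂]⟩
  obtain ⟨⟨⟨t, ht₁, ht₂⟩⟩⟩ := hlp.sq_hasLift sq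
  -- f is a retract of p via (i ≫ i', t) and (j, s); p ∈ F ∩ W, so f ∈ F ∩ W by RLP
  have hfFW : (F ⊓ W) f := by
    rw [hM.wfs₁.rlp f]
    intro A B c hc
    have hcp : HasLiftingProperty c p := (hM.wfs₁.llp c).mp hc p ⟨hp, hWp⟩
    constructor
    intro u v sq'
    have sq'' : CommSq (u ≫ i ≫ i') c p (v ≫ j) := ⟨by
      slice_lhs 3 4 => rw [hfact]
      slice_lhs 2 3 => rw [hsq₁]
      rw [← Category.assoc, sq'.w, Category.assoc]⟩
    obtain ⟨⟨⟨l, hl₁, hl₂⟩⟩⟩ := hcp.sq_hasLift sq''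
    exact ⟨⟨⟨l ≫ t, by
        rw [← Category.assoc, hl₁]
        simp [ht₁, hir], by
        rw [Category.assoc, ht₂, ← Category.assoc, hl₂]
        simp [hjs]⟩⟩⟩
  exact hfFW.2

/-- In a generalized model category, the class of weak equivalences is
closed under retracts. -/
theorem weakEquivalences_closed_under_retracts
    {W C F : MorphismProperty M} (hM : IsGMC W C F)
    {X Y Z T : M} (f : X ⟶ Y) (g : Z ⟶ T)
    (i : X ⟶ Z) (r : Z ⟶ X) (j : Y ⟶ T) (s : T ⟶ Y)
    (hir : i ≫ r = 𝟙 X) (hjs : j ≫ s = 𝟙 Y)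
    (hsq₁ : i ≫ g = f ≫ j) (hsq₂ : g ≫ s = r ≫ f)
    (hg : W g) : W f := by
  -- factor f = j' ≫ q with j' ∈ C ∩ W and q ∈ F
  obtain ⟨E, j', q, hj', hq, hfact⟩ := hM.wfs₂.fact f
  -- take the pushout P of j' along i
  have : HasPushout j' i := hM.pushoutCof j' i hj'.1
  let a : E ⟶ pushout j' i := pushout.inl j' i
  let b : Z ⟶ pushout j' i := pushout.inr j' i
  -- b is a pushout of j' ∈ C ∩ W, hence in C ∩ W (by LLP against F)
  have hb : (C ⊓ W) b := by
    rw [hM.wfs₂.llp b]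
    intro U V h hh
    constructor
    intro u v sq
    have sq' : CommSq (i ≫ u) j' h (a ≫ v) := ⟨by
      rw [Category.assoc, sq.w, ← Category.assoc, ← pushout.condition, Category.assoc]⟩
    have hlp : HasLiftingProperty j' h := (hM.wfs₂.llp j').mp hj' h hh
    obtain ⟨⟨⟨l, hl₁, hl₂⟩⟩⟩ := hlp.sq_hasLift sq'
    refine ⟨⟨⟨pushout.desc l u hl₁, by simp [b, pushout.inl_desc, pushout.inr_desc, pushout.inl_desc_assoc, pushout.inr_desc_assoc], ?_⟩⟩⟩
    apply pushout.hom_ext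
    · simpa [pushout.inl_desc, pushout.inr_desc, pushout.inl_desc_assoc, pushout.inr_desc_assoc] using hl₂
    · simpa [b, pushout.inl_desc, pushout.inr_desc, pushout.inl_desc_assoc, pushout.inr_desc_assoc] using sq.w
  -- induced map k : P ⟶ T
  let k : pushout j' i ⟶ T := pushout.desc (q ≫ j) g (by
    rw [← Category.assoc, hfact, hsq₁])
  have hbk : b ≫ k = g := by simp [b, k, pushout.inl_desc, pushout.inr_desc, pushout.inl_desc_assoc, pushout.inr_desc_assoc]
  have hWk : W k := hM.twoOutOfThree.of_precomp b k hb.2 (by rwa [hbk])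
  -- π : P ⟶ E retraction of a
  let π : pushout j' i ⟶ E := pushout.desc (𝟙 E) (r ≫ j') (by rw [Category.comp_id, ← Category.assoc, hir, Category.id_comp])
  -- q is a retract of k, with q ∈ F and k ∈ W; apply the fibration case
  have hWq : W q := by
    refine fibration_retract_of_weq hM q k a π j s ?_ hjs ?_ ?_ hq hWk
    · simp [a, π, pushout.inl_desc, pushout.inr_desc, pushout.inl_desc_assoc, pushout.inr_desc_assoc]
    · simp [a, k, pushout.inl_desc, pushout.inr_desc, pushout.inl_desc_assoc, pushout.inr_desc_assoc]
    · apply pushout.hom_ext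
      · simp [a, k, π, hjs, hfact, pushout.inl_desc, pushout.inr_desc, pushout.inl_desc_assoc, pushout.inr_desc_assoc]
      · simp [b, k, π, hsq₂, hfact, pushout.inl_desc, pushout.inr_desc, pushout.inl_desc_assoc, pushout.inr_desc_assoc]
  rw [← hfact]
  exact hM.twoOutOfThree.comp_mem j' q hj'.2 hWq

end PaperStacks
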